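/- Let (n,m,k,l) be natural numbers with m ≤ n−m, k ≤ n, m+k−n ≤ l and l ≤ min(m,k). Then ∑_{x=0}^{m} p(x | n,m,k,l) = 1, where p(x | n,m,k,l) is the explicit Racah-presentation expression. In particular the values p(x | n,m,k,l) for 0 ≤ x ≤ m sum to one. -/

import Mathlib

open Finset

/-- Rising factorial `(a)_r = a(a+1)⋯(a+r−1)` in `ℚ`. -/
noncomputable def risingFac (a : ℚ) (r : ℕ) : ℚ := ∏ j ∈ Finset.range r, (a + j)

/-- The terminating `₄F₃`-hypergeometric (Racah polynomial) sum
`∑_{r=0}^{min(x,M,N)} ((−x)_r (x−n−1)_r (−M)_r (−N)_r)/(r! (−m)_r (m−n)_r (−M−N)_r)`. -/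
noncomputable def racahSum (n m M N x : ℕ) : ℚ :=
  ∑ r ∈ Finset.range (min x (min M N) + 1),
    risingFac (-(x : ℚ)) r * risingFac ((x : ℚ) - n - 1) r * risingFac (-(M : ℚ)) r *
        risingFac (-(N : ℚ)) r /
      ((r.factorial : ℚ) * risingFac (-(m : ℚ)) r * risingFac ((m : ℚ) - n) r *
        risingFac (-((M : ℚ) + N)) r)

/-- The explicit Racah-presentation probability mass function `p(x | n,m,k,l)`,
with `M := m−l` and `N := n−m−k+l` (realized as `n+l-m-k` in `ℕ`). -/
noncomputable def racahPMF (n m k l x : ℕ) : ℚ :=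
  ((n - k).choose (m - l) : ℚ) * ((n.choose x : ℚ) / (n.choose m : ℚ)) *
    (((n : ℚ) - 2 * x + 1) / ((n : ℚ) - x + 1)) *
    racahSum n m (m - l) (n + l - m - k) x


lemma risingFac_zero (a : ℚ) : risingFac a 0 = 1 := by simp [risingFac]

lemma risingFac_succ (a : ℚ) (r : ℕ) : risingFac a (r+1) = risingFac a r * (a + r) := by
  simp [risingFac, Finset.prod_range_succ]

lemma risingFac_succ' (a : ℚ) (r : ℕ) : risingFac a (r+1) = a * risingFac (a+1) r := by
  rw [risingFac, Finset.prod_range_succ', risingFac]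
  push_cast
  rw [add_zero, mul_comm]
  congr 1
  exact Finset.prod_congr rfl fun j _ => by ring

lemma risingFac_neg_eq_zero (x r : ℕ) (h : x < r) : risingFac (-(x:ℚ)) r = 0 := by
  apply Finset.prod_eq_zero (Finset.mem_range.2 h)
  simp

lemma choose_cast_succ (a r : ℕ) :
    (a.choose r : ℚ) * ((a:ℚ) - r) = (a.choose (r+1) : ℚ) * (r+1) := by
  rcases le_or_gt (r+1) a with h | h
  · have := Nat.choose_succ_right_eq a r
    have hc : ((a.choose (r+1) * (r+1) : ℕ) : ℚ) = ((a.choose r * (a - r) : ℕ) : ℚ) := by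
      exact_mod_cast congrArg (Nat.cast (R := ℚ)) this
    push_cast [Nat.cast_sub (by omega : r ≤ a)] at hc
    linarith [hc]
  · rcases Nat.lt_or_ge a r with h2 | h2
    · rw [Nat.choose_eq_zero_of_lt h2, Nat.choose_eq_zero_of_lt (by omega)]; simp
    · have ha : a = r := by omega
      subst ha
      rw [Nat.choose_eq_zero_of_lt (Nat.lt_succ_self a)]
      simp

lemma risingFac_neg_nat (a r : ℕ) :
    risingFac (-(a:ℚ)) r = (-1)^r * (r.factorial : ℚ) * (a.choose r : ℚ) := by
  induction r with
  | zero => simp [risingFac]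
  | succ r ih =>
    rw [risingFac_succ, ih]
    have h := choose_cast_succ a r
    push_cast [Nat.factorial_succ]
    linear_combination (-((-1:ℚ))^r * r.factorial) * h

lemma risingFac_neg_ne_zero (a r : ℕ) (h : r ≤ a) : risingFac (-(a:ℚ)) r ≠ 0 := by
  rw [risingFac_neg_nat]
  have h1 : (0:ℚ) < a.choose r := by exact_mod_cast Nat.choose_pos h
  have h2 : (0:ℚ) < r.factorial := by exact_mod_cast r.factorial_pos
  intro hz
  rcases mul_eq_zero.1 hz with hz | hz
  · rcases mul_eq_zero.1 hz with hz | hz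
    · exact pow_ne_zero r (by norm_num) hz
    · linarith
  · linarith

def SS (M N : ℕ) : ℤ := ∑ r ∈ Finset.range (N+1), (-1:ℤ)^r * N.choose r * (M+N-r).choose N

lemma SS_zero_right (M : ℕ) : SS M 0 = 1 := by simp [SS]

lemma SS_zero_left (N : ℕ) : SS 0 N = 1 := by
  rw [SS]
  rw [Finset.sum_eq_single 0]
  · simp
  · intro r hr hr0
    have h1 : r ≤ N := by simpa [Nat.lt_succ_iff] using Finset.mem_range.1 hr
    have : 0 + N - r < N := by omega
    rw [Nat.choose_eq_zero_of_lt this]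
    ring
  · intro h; exact absurd (Finset.mem_range.2 (by omega)) h

lemma SS_rec (M N : ℕ) : SS (M+1) (N+1) + SS M N = SS M (N+1) + SS (M+1) N := by
  have h1 : SS (M+1) (N+1) = SS M (N+1) +
      ∑ r ∈ Finset.range (N+2), (-1:ℤ)^r * ((N+1).choose r) * ((M+N+1-r).choose N) := by
    rw [SS, SS, ← Finset.sum_add_distrib]
    apply Finset.sum_congr rfl
    intro r hr
    have hr' : r ≤ N+1 := by simpa [Nat.lt_succ_iff] using Finset.mem_range.1 hr
    have e1 : M+1+(N+1)-r = (M+N+1-r)+1 := by omega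
    have e2 : M+(N+1)-r = M+N+1-r := by omega
    rw [e1, e2, Nat.choose_succ_succ]
    push_cast; ring
  have h2 : ∑ r ∈ Finset.range (N+2), (-1:ℤ)^r * ((N+1).choose r) * ((M+N+1-r).choose N)
      = SS (M+1) N - SS M N := by
    rw [Finset.sum_range_succ']
    have e : ∀ i ∈ Finset.range (N+1),
        (-1:ℤ)^(i+1) * ((N+1).choose (i+1)) * ((M+N+1-(i+1)).choose N)
        = -((-1:ℤ)^i * (N.choose i) * ((M+N-i).choose N))
          + (-1:ℤ)^(i+1) * (N.choose (i+1)) * ((M+N-i).choose N) := by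
      intro i hi
      have e1 : M+N+1-(i+1) = M+N-i := by omega
      rw [e1, Nat.choose_succ_succ]
      push_cast; ring
    rw [Finset.sum_congr rfl e, Finset.sum_add_distrib, Finset.sum_neg_distrib]
    have hT : ∑ i ∈ Finset.range (N+1), (-1:ℤ)^(i+1) * (N.choose (i+1)) * ((M+N-i).choose N)
        = ∑ i ∈ Finset.range N, (-1:ℤ)^(i+1) * (N.choose (i+1)) * ((M+N-i).choose N) := by
      rw [Finset.sum_range_succ, Nat.choose_eq_zero_of_lt (Nat.lt_succ_self N)]
      simp
    have hS : SS (M+1) N = (∑ i ∈ Finset.range N, (-1:ℤ)^(i+1) * (N.choose (i+1)) * ((M+N-i).choose N))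
        + (-1:ℤ)^0 * ((N+1).choose 0) * ((M+N+1-0).choose N) := by
      rw [SS, Finset.sum_range_succ']
      congr 1
      · apply Finset.sum_congr rfl
        intro i hi
        have e1 : M+1+N-(i+1) = M+N-i := by omega
        rw [e1]
      · norm_num
        congr 1
        omega
    rw [hT, hS, SS]
    ring
  rw [h1, h2]; ring

lemma SS_eq_one : ∀ N M, SS M N = 1 := by
  intro N
  induction N with
  | zero => exact SS_zero_right
  | succ N ihN =>
    intro M
    induction M with
    | zero => exact SS_zero_left _
    | succ M ihM =>
      have h := SS_rec M N
      rw [ihM, ihN M, ihN (M+1)] at h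
      omega

lemma lemB (M N : ℕ) :
    ∑ r ∈ Finset.range (min M N + 1),
      ((M+N).choose M : ℚ) * (risingFac (-(M:ℚ)) r * risingFac (-(N:ℚ)) r) /
        ((r.factorial : ℚ) * risingFac (-((M:ℚ)+N)) r) = 1 := by
  have key : ∀ r ∈ Finset.range (min M N + 1),
      ((M+N).choose M : ℚ) * (risingFac (-(M:ℚ)) r * risingFac (-(N:ℚ)) r) /
        ((r.factorial : ℚ) * risingFac (-((M:ℚ)+N)) r)
      = ((-1:ℚ))^r * (N.choose r) * ((M+N-r).choose N) := by
    intro r hr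
    have hrM : r ≤ M := le_trans (by simpa [Nat.lt_succ_iff] using Finset.mem_range.1 hr) (min_le_left _ _)
    have hrN : r ≤ N := le_trans (by simpa [Nat.lt_succ_iff] using Finset.mem_range.1 hr) (min_le_right _ _)
    have eMN : (-((M:ℚ)+N)) = -(((M+N : ℕ) : ℚ)) := by push_cast; ring
    rw [eMN, risingFac_neg_nat, risingFac_neg_nat, risingFac_neg_nat]
    have hfac : ((r.factorial : ℚ)) ≠ 0 := by exact_mod_cast r.factorial_pos.ne'
    have hch : ((M+N).choose r : ℚ) ≠ 0 := by
      exact_mod_cast (Nat.choose_pos (by omega : r ≤ M+N)).ne'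
    have hmul : (M+N).choose M * M.choose r = (M+N).choose r * ((M+N-r).choose (M-r)) :=
      Nat.choose_mul hrM
    have hsymm : (M+N-r).choose (M-r) = (M+N-r).choose N := by
      rw [← Nat.choose_symm (show N ≤ M+N-r by omega)]
      congr 1
      omega
    have hmul' : ((M+N).choose M : ℚ) * (M.choose r : ℚ)
        = ((M+N).choose r : ℚ) * ((M+N-r).choose N : ℚ) := by
      rw [← hsymm]; exact_mod_cast congrArg (Nat.cast (R := ℚ)) hmul
    have hpow : ((-1:ℚ))^r ≠ 0 := pow_ne_zero _ (by norm_num)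
    have hden : ((r.factorial:ℚ)) * ((-1:ℚ)^r * (r.factorial:ℚ) * ((M+N).choose r : ℚ)) ≠ 0 :=
      mul_ne_zero hfac (mul_ne_zero (mul_ne_zero hpow hfac) hch)
    rw [div_eq_iff hden]
    linear_combination ((-1:ℚ)^r * (-1:ℚ)^r * (r.factorial:ℚ) * (r.factorial:ℚ) * (N.choose r : ℚ)) * hmul'
  rw [Finset.sum_congr rfl key]
  have hsub : Finset.range (min M N + 1) ⊆ Finset.range (N+1) :=
    Finset.range_subset_range.2 (by omega)
  rw [Finset.sum_subset hsub (by
    intro r hr hr'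
    have h1 : r ≤ N := by simpa [Nat.lt_succ_iff] using Finset.mem_range.1 hr
    have h2 : min M N < r := by
      by_contra h
      exact hr' (Finset.mem_range.2 (by omega))
    have h3 : M + N - r < N := by omega
    rw [Nat.choose_eq_zero_of_lt h3]
    norm_num)]
  have hS := SS_eq_one N M
  have hc : ((SS M N : ℤ) : ℚ)
      = ∑ r ∈ Finset.range (N+1), (-1:ℚ)^r * (N.choose r) * ((M+N-r).choose N) := by
    rw [SS]
    push_cast
    rfl
  rw [← hc, hS]
  norm_num

lemma risingFac_sub_ne_zero (n m r : ℕ) (h : r + m ≤ n) : risingFac ((m:ℚ) - n) r ≠ 0 := by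
  rw [risingFac]
  rw [Finset.prod_ne_zero_iff]
  intro j hj
  have hj' : j < r := Finset.mem_range.1 hj
  have hlt : (m:ℚ) + j < n := by exact_mod_cast (show m + j < n by omega)
  intro hz
  linarith

lemma lemA (n r : ℕ) : ∀ m, 2*m ≤ n →
    ∑ x ∈ Finset.range (m+1), (n.choose x : ℚ) * (((n:ℚ) - 2*x + 1)/((n:ℚ) - x + 1)) *
      (risingFac (-(x:ℚ)) r * risingFac ((x:ℚ) - n - 1) r)
    = (n.choose m : ℚ) * risingFac (-(m:ℚ)) r * risingFac ((m:ℚ) - n) r := by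
  intro m
  induction m with
  | zero =>
    intro _
    rw [Finset.sum_range_one]
    have h0 : ((n:ℚ) - (0:ℕ) + 1) ≠ 0 := by
      have : (0:ℚ) ≤ (n:ℚ) := Nat.cast_nonneg n
      push_cast
      intro h; linarith
    cases r with
    | zero =>
      have hne : ((n:ℚ)+1) ≠ 0 := by positivity
      simp [risingFac]
      exact hne
    | succ r =>
      rw [risingFac_succ' (-((0:ℕ):ℚ)) r]
      norm_num
  | succ m ih =>
    intro h2m
    have hmn : (m:ℚ) < (n:ℚ) := by exact_mod_cast (show m < n by omega)
    rw [Finset.sum_range_succ, ih (by omega)]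
    have hc : (n.choose m : ℚ) * ((n:ℚ) - m) = (n.choose (m+1) : ℚ) * ((m:ℚ)+1) :=
      choose_cast_succ n m
    have hw : (n.choose (m+1) : ℚ) * (((n:ℚ) - 2*((m+1:ℕ):ℚ) + 1)/((n:ℚ) - ((m+1:ℕ):ℚ) + 1))
        = (n.choose (m+1) : ℚ) - (n.choose m : ℚ) := by
      have hden : ((n:ℚ) - ((m+1:ℕ):ℚ) + 1) ≠ 0 := by
        push_cast
        intro h; linarith
      rw [mul_div_assoc', div_eq_iff hden]
      push_cast
      linear_combination hc
    rw [hw]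
    rw [show (-(((m+1:ℕ)):ℚ)) = -(m:ℚ) - 1 from by push_cast; ring]
    rw [show (((m+1:ℕ)):ℚ) - (n:ℚ) - 1 = (m:ℚ) - n from by push_cast; ring]
    rw [show (((m+1:ℕ)):ℚ) - (n:ℚ) = ((m:ℚ) - n) + 1 from by push_cast; ring]
    cases r with
    | zero => simp [risingFac]
    | succ r =>
      rw [risingFac_succ (-(m:ℚ)) r, risingFac_succ' (-(m:ℚ) - 1) r,
        risingFac_succ' ((m:ℚ) - n) r, risingFac_succ (((m:ℚ) - n) + 1) r]
      rw [show (-(m:ℚ) - 1) + 1 = -(m:ℚ) from by ring]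
      linear_combination (-(risingFac (-(m:ℚ)) r * risingFac ((m:ℚ) - n + 1) r * ((r:ℚ)+1))) * hc

noncomputable def Trm (n m M N : ℕ) (r : ℕ) (x : ℕ) : ℚ :=
  risingFac (-(x : ℚ)) r * risingFac ((x : ℚ) - n - 1) r * risingFac (-(M : ℚ)) r *
      risingFac (-(N : ℚ)) r /
    ((r.factorial : ℚ) * risingFac (-(m : ℚ)) r * risingFac ((m : ℚ) - n) r *
      risingFac (-((M : ℚ) + N)) r)

lemma racahSum_ext (n m M N x : ℕ) :
    racahSum n m M N x = ∑ r ∈ Finset.range (min M N + 1), Trm n m M N r x := by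
  unfold racahSum Trm
  apply Finset.sum_subset (Finset.range_subset_range.2 (by omega : min x (min M N) + 1 ≤ min M N + 1))
  intro r hr hr'
  have h1 : r ≤ min M N := by simpa [Nat.lt_succ_iff] using Finset.mem_range.1 hr
  have h2 : x < r := by
    have h3 : min x (min M N) < r := by
      by_contra hh
      exact hr' (Finset.mem_range.2 (by omega))
    omega
  rw [risingFac_neg_eq_zero x r h2]
  simp

lemma main_aux (n m M N : ℕ) (hm : 2*m ≤ n) (hMm : M ≤ m) :
    ∑ x ∈ Finset.range (m+1),
      ((M+N).choose M : ℚ) * ((n.choose x : ℚ)/(n.choose m : ℚ)) *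
        (((n:ℚ) - 2*x + 1)/((n:ℚ) - x + 1)) * racahSum n m M N x = 1 := by
  have hm' : m ≤ n := by omega
  have hCnm : (n.choose m : ℚ) ≠ 0 := by exact_mod_cast (Nat.choose_pos hm').ne'
  have step1 : ∀ x ∈ Finset.range (m+1),
      ((M+N).choose M : ℚ) * ((n.choose x : ℚ)/(n.choose m : ℚ)) *
        (((n:ℚ) - 2*x + 1)/((n:ℚ) - x + 1)) * racahSum n m M N x
      = ∑ r ∈ Finset.range (min M N + 1),
          ((M+N).choose M : ℚ) * ((n.choose x : ℚ)/(n.choose m : ℚ)) *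
            (((n:ℚ) - 2*x + 1)/((n:ℚ) - x + 1)) * Trm n m M N r x := by
    intro x _
    rw [racahSum_ext, Finset.mul_sum]
  rw [Finset.sum_congr rfl step1, Finset.sum_comm]
  have inner : ∀ r ∈ Finset.range (min M N + 1),
      (∑ x ∈ Finset.range (m+1),
        ((M+N).choose M : ℚ) * ((n.choose x : ℚ)/(n.choose m : ℚ)) *
          (((n:ℚ) - 2*x + 1)/((n:ℚ) - x + 1)) * Trm n m M N r x)
      = ((M+N).choose M : ℚ) * (risingFac (-(M:ℚ)) r * risingFac (-(N:ℚ)) r) /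
          ((r.factorial : ℚ) * risingFac (-((M:ℚ)+N)) r) := by
    intro r hr
    have hrM : r ≤ M := le_trans (by simpa [Nat.lt_succ_iff] using Finset.mem_range.1 hr)
      (min_le_left _ _)
    have hrm : r ≤ m := le_trans hrM hMm
    have hrfm : risingFac (-(m:ℚ)) r ≠ 0 := risingFac_neg_ne_zero m r hrm
    have hrfmn : risingFac ((m:ℚ) - n) r ≠ 0 := risingFac_sub_ne_zero n m r (by omega)
    have hfac : ((r.factorial : ℚ)) ≠ 0 := by exact_mod_cast r.factorial_pos.ne'
    have hstep : ∀ x ∈ Finset.range (m+1),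
        ((M+N).choose M : ℚ) * ((n.choose x : ℚ)/(n.choose m : ℚ)) *
          (((n:ℚ) - 2*x + 1)/((n:ℚ) - x + 1)) * Trm n m M N r x
        = (n.choose x : ℚ) * (((n:ℚ) - 2*x + 1)/((n:ℚ) - x + 1)) *
            (risingFac (-(x:ℚ)) r * risingFac ((x:ℚ) - n - 1) r) *
          (((M+N).choose M : ℚ) * (risingFac (-(M:ℚ)) r * risingFac (-(N:ℚ)) r) /
            ((n.choose m : ℚ) * ((r.factorial : ℚ) * risingFac (-(m:ℚ)) r *
              risingFac ((m:ℚ) - n) r * risingFac (-((M:ℚ)+N)) r))) := by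
      intro x _
      unfold Trm
      ring
    rw [Finset.sum_congr rfl hstep, ← Finset.sum_mul, lemA n r m hm]
    have hb : (n.choose m : ℚ) * risingFac (-(m:ℚ)) r * risingFac ((m:ℚ) - n) r ≠ 0 :=
      mul_ne_zero (mul_ne_zero hCnm hrfm) hrfmn
    rw [show ((n.choose m : ℚ) * ((r.factorial : ℚ) * risingFac (-(m:ℚ)) r *
          risingFac ((m:ℚ) - n) r * risingFac (-((M:ℚ)+N)) r))
        = ((n.choose m : ℚ) * risingFac (-(m:ℚ)) r * risingFac ((m:ℚ) - n) r) *
          ((r.factorial : ℚ) * risingFac (-((M:ℚ)+N)) r) from by ring]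
    rw [mul_div_assoc', mul_div_mul_left _ _ hb]
  rw [Finset.sum_congr rfl inner]
  exact lemB M N

/-- **Total mass one**: the Racah-presentation pmf values `p(x | n,m,k,l)` for
`0 ≤ x ≤ m` sum to one. -/
theorem racahPMF_sum_eq_one (n m k l : ℕ) (hm : 2 * m ≤ n) (hk : k ≤ n)
    (hl : m + k ≤ n + l) (hlm : l ≤ m) (hlk : l ≤ k) :
    ∑ x ∈ Finset.range (m + 1), racahPMF n m k l x = 1 := by
  have h1 : n - k = (m - l) + (n + l - m - k) := by omega
  have h2 : ∀ x ∈ Finset.range (m+1), racahPMF n m k l x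
      = (((m - l) + (n + l - m - k)).choose (m - l) : ℚ) *
          ((n.choose x : ℚ)/(n.choose m : ℚ)) *
          (((n:ℚ) - 2*x + 1)/((n:ℚ) - x + 1)) * racahSum n m (m - l) (n + l - m - k) x := by
    intro x _
    unfold racahPMF
    rw [h1]
  rw [Finset.sum_congr rfl h2]
  exact main_aux n m (m - l) (n + l - m - k) hm (by omega)
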